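/- Let q : G → ℚ/ℤ and q' : G' → ℚ/ℤ be nondegenerate quadratic functions on finite abelian groups. Then q and q' are isomorphic if and only if there exists a group isomorphism ψ : G → G' such that b_q(x,y) = b_{q'}(ψx, ψy) for all x,y, d_q(x) = d_{q'}(ψx) for all x, and γ(q) = γ(q'). -/

import Mathlib

/-- The character `ℚ/ℤ → ℂ`, `r mod ℤ ↦ exp(2πir)`. -/
noncomputable def eQZ : AddCircle (1 : ℚ) → ℂ :=
  Function.Periodic.lift (f := fun r : ℚ => Complex.exp (2 * Real.pi * Complex.I * (r : ℂ)))
    (by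
      intro r
      simp only []
      push_cast
      rw [mul_add, mul_one, Complex.exp_add, Complex.exp_two_pi_mul_I, mul_one])

/-- The normalized Gauss sum `γ(q) = |G|^{-1/2} ∑ₓ exp(2πi q(x))`. -/
noncomputable def gaussSum' {G : Type*} [Fintype G] (q : G → AddCircle (1 : ℚ)) : ℂ :=
  ((Real.sqrt (Fintype.card G) : ℂ))⁻¹ * ∑ x, eQZ (q x)

lemma eQZ_coe (r : ℚ) : eQZ (r : AddCircle (1:ℚ)) = Complex.exp (2 * Real.pi * Complex.I * (r : ℂ)) :=
  Function.Periodic.lift_coe _ _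

lemma eQZ_add (a b : AddCircle (1:ℚ)) : eQZ (a + b) = eQZ a * eQZ b := by
  induction a using QuotientAddGroup.induction_on with
  | H r =>
  induction b using QuotientAddGroup.induction_on with
  | H s =>
  rw [← QuotientAddGroup.mk_add]
  show eQZ ((r + s : ℚ) : AddCircle (1:ℚ)) = _
  rw [eQZ_coe, eQZ_coe, eQZ_coe, ← Complex.exp_add]
  push_cast
  ring_nf

lemma eQZ_zero : eQZ (0 : AddCircle (1:ℚ)) = 1 := by
  rw [show (0 : AddCircle (1:ℚ)) = ((0:ℚ) : AddCircle (1:ℚ)) by norm_cast, eQZ_coe]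
  simp

lemma two_pi_I_ne : (2 * (Real.pi:ℂ) * Complex.I) ≠ 0 := by
  simp [Real.pi_ne_zero, Complex.I_ne_zero]

lemma eQZ_eq_one {t : AddCircle (1:ℚ)} : eQZ t = 1 ↔ t = 0 := by
  induction t using QuotientAddGroup.induction_on with
  | H r =>
  rw [eQZ_coe, Complex.exp_eq_one_iff, AddCircle.coe_eq_zero_iff]
  constructor
  · rintro ⟨n, hn⟩
    refine ⟨n, ?_⟩
    have h1 : (r : ℂ) = (n : ℂ) := by
      have h := hn
      rw [show (n:ℂ) * (2 * Real.pi * Complex.I) = 2 * Real.pi * Complex.I * (n:ℂ) by ring] at h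
      exact mul_left_cancel₀ two_pi_I_ne h
    have h2 : (r : ℚ) = (n : ℚ) := by exact_mod_cast h1
    simp [h2]
  · rintro ⟨n, hn⟩
    refine ⟨n, ?_⟩
    have h1 : (r : ℚ) = (n : ℚ) := by
      rw [← hn]; simp
    rw [h1]; push_cast; ring

lemma eQZ_conj (a : AddCircle (1:ℚ)) : (starRingEnd ℂ) (eQZ a) = eQZ (-a) := by
  induction a using QuotientAddGroup.induction_on with
  | H r =>
  rw [show (-((r:ℚ) : AddCircle (1:ℚ))) = ((-r : ℚ) : AddCircle (1:ℚ)) by norm_cast,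
    eQZ_coe, eQZ_coe, ← Complex.exp_conj]
  congr 1
  rw [map_mul, map_mul, map_mul, Complex.conj_I, Complex.conj_ofReal, map_ratCast, map_ofNat]
  push_cast
  ring

lemma half_lemma (t : AddCircle (1:ℚ)) (h : t + t = 0) :
    t = 0 ∨ t = ((1/2 : ℚ) : AddCircle (1:ℚ)) := by
  induction t using QuotientAddGroup.induction_on with
  | H r =>
  rw [← QuotientAddGroup.mk_add, AddCircle.coe_eq_zero_iff] at h
  obtain ⟨n, hn⟩ := h
  have hr : r = (n : ℚ) / 2 := by
    have : (n:ℚ) = r + r := by simpa using hn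
    linarith
  rcases Int.even_or_odd n with ⟨m, hm⟩ | ⟨m, hm⟩
  · left
    rw [AddCircle.coe_eq_zero_iff]
    refine ⟨m, ?_⟩
    simp only [zsmul_eq_mul, mul_one]
    subst hm; rw [hr]; push_cast; ring
  · right
    have h1 : r - 1/2 = (m : ℚ) := by subst hm; rw [hr]; push_cast; ring
    have h2 : ((r : ℚ) : AddCircle (1:ℚ)) - ((1/2:ℚ) : AddCircle (1:ℚ)) = 0 := by
      rw [← QuotientAddGroup.mk_sub, AddCircle.coe_eq_zero_iff]
      refine ⟨m, ?_⟩
      simp only [zsmul_eq_mul, mul_one]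
      exact h1.symm
    exact sub_eq_zero.mp h2

lemma orth {G : Type*} [AddCommGroup G] [Fintype G] (c : G → AddCircle (1:ℚ))
    (hc : ∀ x y, c (x + y) = c x + c y) :
    (∑ x, eQZ (c x)) = if ∀ x, c x = 0 then (Fintype.card G : ℂ) else 0 := by
  split_ifs with h
  · simp only [fun x => h x, eQZ_zero]
    simp
  · push_neg at h
    obtain ⟨y₀, hy₀⟩ := h
    have key : (∑ x, eQZ (c x)) = eQZ (c y₀) * ∑ x, eQZ (c x) := by
      calc (∑ x, eQZ (c x)) = ∑ x, eQZ (c (y₀ + x)) :=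
            (Fintype.sum_equiv (Equiv.addLeft y₀) _ _ (fun x => rfl)).symm
        _ = eQZ (c y₀) * ∑ x, eQZ (c x) := by
            rw [Finset.mul_sum]
            exact Finset.sum_congr rfl fun x _ => by rw [hc, eQZ_add]
    have h2 : (eQZ (c y₀) - 1) * ∑ x, eQZ (c x) = 0 := by linear_combination -key
    rcases mul_eq_zero.mp h2 with h1 | h1
    · exact absurd (eQZ_eq_one.mp (sub_eq_zero.mp h1)) hy₀
    · exact h1

lemma key {G : Type*} [AddCommGroup G] [Fintype G] (q r : G → AddCircle (1:ℚ))
    (hq : ∀ x₁ x₂ y : G,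
      q (x₁ + x₂ + y) - q (x₁ + x₂) - q y =
        (q (x₁ + y) - q x₁ - q y) + (q (x₂ + y) - q x₂ - q y))
    (hr : ∀ x y, r (x + y) = r x + r y) :
    (∑ x, eQZ (q x + r x)) * (starRingEnd ℂ) (∑ y, eQZ (q y)) =
      ∑ z, if (∀ y, (q (z + y) - q z - q y) + r y = 0)
        then (Fintype.card G : ℂ) * eQZ (q z + r z) else 0 := by
  have hb2 : ∀ z y₁ y₂ : G, q (z + (y₁ + y₂)) - q z - q (y₁ + y₂) =
      (q (z + y₁) - q z - q y₁) + (q (z + y₂) - q z - q y₂) := by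
    intro z y₁ y₂
    have h1 := hq y₁ y₂ z
    have e : ∀ a b : G, q (a + b) - q a - q b = q (b + a) - q b - q a := by
      intro a b; rw [add_comm]; abel
    rw [e z (y₁ + y₂), e z y₁, e z y₂]
    exact h1
  calc (∑ x, eQZ (q x + r x)) * (starRingEnd ℂ) (∑ y, eQZ (q y))
      = ∑ y, ∑ x, eQZ ((q x + r x) - q y) := by
        rw [map_sum, Finset.sum_mul_sum]
        rw [Finset.sum_comm]
        refine Finset.sum_congr rfl fun y _ => Finset.sum_congr rfl fun x _ => ?_
        rw [eQZ_conj, ← eQZ_add, sub_eq_add_neg]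
    _ = ∑ y, ∑ z, eQZ ((q z + r z) + ((q (z + y) - q z - q y) + r y)) := by
        refine Finset.sum_congr rfl fun y _ => ?_
        refine (Fintype.sum_equiv (Equiv.addLeft y) _ _ fun z => ?_).symm
        congr 1
        show (q z + r z) + ((q (z + y) - q z - q y) + r y) = (q (y + z) + r (y + z)) - q y
        rw [hr, add_comm y z]
        abel
    _ = ∑ z, eQZ (q z + r z) * ∑ y, eQZ ((q (z + y) - q z - q y) + r y) := by
        rw [Finset.sum_comm]
        refine Finset.sum_congr rfl fun z _ => ?_
        rw [Finset.mul_sum]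
        exact Finset.sum_congr rfl fun y _ => by rw [eQZ_add]
    _ = ∑ z, if (∀ y, (q (z + y) - q z - q y) + r y = 0)
        then (Fintype.card G : ℂ) * eQZ (q z + r z) else 0 := by
        refine Finset.sum_congr rfl fun z _ => ?_
        rw [orth (fun y => (q (z + y) - q z - q y) + r y)
          (fun y₁ y₂ => by rw [hb2 z y₁ y₂, hr]; abel)]
        split_ifs <;> ring

lemma master {G : Type*} [AddCommGroup G] [Fintype G] (q r : G → AddCircle (1:ℚ))
    (hq : ∀ x₁ x₂ y : G,
      q (x₁ + x₂ + y) - q (x₁ + x₂) - q y =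
        (q (x₁ + y) - q x₁ - q y) + (q (x₂ + y) - q x₂ - q y))
    (hnd : ∀ x : G, (∀ y : G, q (x + y) - q x - q y = 0) → x = 0)
    (hr : ∀ x y, r (x + y) = r x + r y)
    (hr2 : ∀ x, r x + r x = 0)
    (hTS : (∑ x, eQZ (q x + r x)) = ∑ x, eQZ (q x)) :
    ∃ α : G ≃+ G, ∀ x, q (α x) + r (α x) = q x := by
  classical
  set b : G → G → AddCircle (1:ℚ) := fun z y => q (z + y) - q z - q y with hbdef
  -- q 0 = 0
  have q0 : q 0 = 0 := by
    have h := hq 0 0 0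
    simp only [add_zero] at h
    have h2 : q 0 - q 0 - q 0 + 0 = q 0 - q 0 - q 0 + (q 0 - q 0 - q 0) := by
      rw [add_zero]; exact h
    have h3 := add_left_cancel h2
    have : -q 0 = 0 := by rw [← h3.symm]; abel
    simpa using this.symm ▸ (neg_eq_zero.mp this)
  -- b additive in first argument
  have hb1 : ∀ z₁ z₂ y, b (z₁ + z₂) y = b z₁ y + b z₂ y := fun z₁ z₂ y => hq z₁ z₂ y
  have hbsymm : ∀ z y, b z y = b y z := by
    intro z y; simp only [hbdef]; rw [add_comm]; abel
  have hb0 : ∀ y, b 0 y = 0 := by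
    intro y; simp only [hbdef, zero_add, q0]; abel
  -- S * conj S = card
  have cardpos : (Fintype.card G : ℂ) ≠ 0 := Nat.cast_ne_zero.mpr Fintype.card_ne_zero
  have Scard : (∑ x, eQZ (q x)) * (starRingEnd ℂ) (∑ y, eQZ (q y)) = (Fintype.card G : ℂ) := by
    have h := key q (fun _ => 0) hq (by intro x y; simp)
    simp only [add_zero] at h
    rw [h]
    rw [Finset.sum_eq_single 0]
    · rw [if_pos (show ∀ y : G, q (0 + y) - q 0 - q y = 0 from fun y => hb0 y)]
      rw [q0, eQZ_zero, mul_one]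
    · intro z _ hz
      rw [if_neg]
      intro hP
      exact hz (hnd z hP)
    · intro h; exact absurd (Finset.mem_univ 0) h
  -- apply key with r
  have hkey := key q r hq hr
  rw [hTS, Scard] at hkey
  -- exists z₀
  obtain ⟨z₀, hz₀mem, hz₀⟩ := Finset.exists_ne_zero_of_sum_ne_zero (s := Finset.univ)
    (f := fun z => if (∀ y : G, q (z + y) - q z - q y + r y = 0)
      then (Fintype.card G : ℂ) * eQZ (q z + r z) else 0) (by rw [← hkey]; exact cardpos)
  have hP₀ : ∀ y, b z₀ y + r y = 0 := by
    by_contra hc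
    exact hz₀ (if_neg hc)
  -- uniqueness
  have huniq : ∀ z, (∀ y, b z y + r y = 0) → z = z₀ := by
    intro z hz
    have : ∀ y, b (z - z₀) y = 0 := by
      intro y
      have e1 : b z y = -r y := eq_neg_of_add_eq_zero_left (hz y)
      have e2 : b z₀ y = -r y := eq_neg_of_add_eq_zero_left (hP₀ y)
      have hsub : b (z - z₀) y + b z₀ y = b z y := by
        rw [← hb1, sub_add_cancel]
      have h3 : b (z - z₀) y = b z y - b z₀ y := by
        rw [← hsub]; abel
      rw [h3, e1, e2]; abel
    have := hnd (z - z₀) this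
    exact sub_eq_zero.mp this
  -- single term evaluation
  have hsum : (∑ z : G, if (∀ y, q (z + y) - q z - q y + r y = 0)
      then (Fintype.card G : ℂ) * eQZ (q z + r z) else 0)
      = (Fintype.card G : ℂ) * eQZ (q z₀ + r z₀) := by
    rw [Finset.sum_eq_single z₀]
    · rw [if_pos (show ∀ y, q (z₀ + y) - q z₀ - q y + r y = 0 from fun y => hP₀ y)]
    · intro z _ hzne
      rw [if_neg]
      intro hP
      exact hzne (huniq z hP)
    · intro h; exact absurd (Finset.mem_univ z₀) h
  have hsingle : (Fintype.card G : ℂ) = (Fintype.card G : ℂ) * eQZ (q z₀ + r z₀) :=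
    hkey.trans hsum
  have hone : eQZ (q z₀ + r z₀) = 1 := by
    have h := hsingle.symm
    exact mul_left_cancel₀ cardpos (h.trans (mul_one (Fintype.card G : ℂ)).symm)
  have hqz₀r : q z₀ + r z₀ = 0 := eQZ_eq_one.mp hone
  -- 2 b z₀ y = 0 and 2 z₀ = 0
  have hb2z : ∀ y, b z₀ y + b z₀ y = 0 := by
    intro y
    have e2 : b z₀ y = -r y := eq_neg_of_add_eq_zero_left (hP₀ y)
    rw [e2]
    have := hr2 y
    rw [← neg_add, this, neg_zero]
  have hz2 : z₀ + z₀ = 0 := by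
    apply hnd
    intro y
    have : b (z₀ + z₀) y = 0 := by rw [hb1]; exact hb2z y
    exact this
  have hrb : ∀ y, r y = b z₀ y := by
    intro y
    have h1 : r y = -(b z₀ y) := eq_neg_of_add_eq_zero_right (hP₀ y)
    have h2 : -(b z₀ y) = b z₀ y := neg_eq_of_add_eq_zero_left (hb2z y)
    rw [h1, h2]
  have hqz : q z₀ = 0 := by
    have h1 := hqz₀r
    rw [hrb z₀] at h1
    have e : b z₀ z₀ = q (z₀ + z₀) - q z₀ - q z₀ := rfl
    rw [e, hz2, q0] at h1
    have h2 : -q z₀ = 0 := by rw [← h1]; abel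
    exact neg_eq_zero.mp h2
  have hrz : r z₀ = 0 := by
    have := hqz₀r
    rw [hqz, zero_add] at this
    exact this
  -- the automorphism
  set f : G → G := (fun x => if b z₀ x = 0 then x else x + z₀) with hf
  have hbadd : ∀ x y, b z₀ (x + y) = b z₀ x + b z₀ y := by
    intro x y
    rw [hbsymm z₀ (x + y), hb1, hbsymm x z₀, hbsymm y z₀]
  have ff : ∀ x, f (f x) = x := by
    intro x
    by_cases h : b z₀ x = 0
    · rw [hf]; simp only [if_pos h]
    · rw [hf]; simp only [if_neg h]
      have h2 : b z₀ (x + z₀) = b z₀ x := by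
        rw [hbadd]
        have : b z₀ z₀ = q (z₀ + z₀) - q z₀ - q z₀ := rfl
        rw [this, hz2, q0, hqz]
        simp
      rw [if_neg (h2.symm ▸ h), add_assoc, hz2, add_zero]
  have fadd : ∀ x y, f (x + y) = f x + f y := by
    intro x y
    by_cases h1 : b z₀ x = 0 <;> by_cases h2 : b z₀ y = 0
    · rw [hf]; simp only []
      rw [if_pos h1, if_pos h2, if_pos (by rw [hbadd, h1, h2, add_zero])]
    · rw [hf]; simp only []
      rw [if_pos h1, if_neg h2, if_neg (by rw [hbadd, h1, zero_add]; exact h2)]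
      abel
    · rw [hf]; simp only []
      rw [if_neg h1, if_pos h2, if_neg (by rw [hbadd, h2, add_zero]; exact h1)]
      abel
    · rw [hf]; simp only []
      rcases halves_aux : half_lemma (b z₀ x) (hb2z x) with hx | hx
      · exact absurd hx h1
      rcases half_lemma (b z₀ y) (hb2z y) with hy | hy
      · exact absurd hy h2
      rw [if_neg h1, if_neg h2, if_pos]
      · have e : x + z₀ + (y + z₀) = x + y + (z₀ + z₀) := by abel
        rw [e, hz2, add_zero]
      · rw [hbadd, hx, hy, ← QuotientAddGroup.mk_add,
          show (1/2 + 1/2 : ℚ) = 1 by norm_num]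
        exact AddCircle.coe_period (p := (1:ℚ))
  -- the value computation
  have val : ∀ x, q (f x) + r (f x) = q x := by
    intro x
    by_cases h : b z₀ x = 0
    · rw [hf]; simp only [if_pos h]
      rw [hrb x, h, add_zero]
    · rw [hf]; simp only [if_neg h]
      have e : q (x + z₀) = b x z₀ + q x + q z₀ := by
        simp only [hbdef]; abel
      calc q (x + z₀) + r (x + z₀)
          = (b x z₀ + q x + q z₀) + (r x + r z₀) := by rw [e, hr]
        _ = q x + (b z₀ x + b z₀ x) := by rw [hbsymm x z₀, hqz, hrz, hrb x]; abel
        _ = q x := by rw [hb2z x, add_zero]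
  exact ⟨AddEquiv.mk' ⟨f, f, ff, ff⟩ fadd, fun x => val x⟩

theorem stmt19 {G G' : Type*} [AddCommGroup G] [Fintype G]
    [AddCommGroup G'] [Fintype G']
    (q : G → AddCircle (1 : ℚ)) (q' : G' → AddCircle (1 : ℚ))
    (hq : ∀ x₁ x₂ y : G,
      q (x₁ + x₂ + y) - q (x₁ + x₂) - q y =
        (q (x₁ + y) - q x₁ - q y) + (q (x₂ + y) - q x₂ - q y))
    (hq' : ∀ x₁ x₂ y : G',
      q' (x₁ + x₂ + y) - q' (x₁ + x₂) - q' y =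
        (q' (x₁ + y) - q' x₁ - q' y) + (q' (x₂ + y) - q' x₂ - q' y))
    (hnd : ∀ x : G, (∀ y : G, q (x + y) - q x - q y = 0) → x = 0)
    (hnd' : ∀ x : G', (∀ y : G', q' (x + y) - q' x - q' y = 0) → x = 0) :
    (∃ ψ : G ≃+ G', ∀ x : G, q' (ψ x) = q x) ↔
      ∃ ψ : G ≃+ G',
        (∀ x y : G, q (x + y) - q x - q y = q' (ψ x + ψ y) - q' (ψ x) - q' (ψ y))
        ∧ (∀ x : G, q x - q (-x) = q' (ψ x) - q' (-(ψ x)))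
        ∧ gaussSum' q = gaussSum' q' := by
  constructor
  · rintro ⟨ψ, hψ⟩
    refine ⟨ψ, fun x y => ?_, fun x => ?_, ?_⟩
    · rw [← map_add, hψ, hψ, hψ]
    · rw [hψ, ← map_neg, hψ]
    · unfold gaussSum'
      have hc : Fintype.card G = Fintype.card G' := Fintype.card_congr ψ.toEquiv
      have hs : (∑ x, eQZ (q x)) = ∑ x', eQZ (q' x') :=
        Fintype.sum_equiv ψ.toEquiv _ _ (fun x => by
          show eQZ (q x) = eQZ (q' (ψ x)); rw [hψ])
      rw [hc, hs]
  · rintro ⟨ψ, h1, h2, h3⟩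
    set r : G → AddCircle (1:ℚ) := fun x => q' (ψ x) - q x with hrdef
    have hr : ∀ x y, r (x + y) = r x + r y := by
      intro x y
      have hx := h1 x y
      rw [← map_add] at hx
      show q' (ψ (x + y)) - q (x + y) = (q' (ψ x) - q x) + (q' (ψ y) - q y)
      apply sub_eq_zero.mp
      have e : (q' (ψ (x + y)) - q (x + y)) - ((q' (ψ x) - q x) + (q' (ψ y) - q y))
          = (q' (ψ (x + y)) - q' (ψ x) - q' (ψ y)) - (q (x + y) - q x - q y) := by abel
      rw [e, ← hx, sub_self]
    have hr0 : r 0 = 0 := by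
      have h := hr 0 0
      rw [add_zero] at h
      exact (add_eq_left.mp h.symm)
    have hr2 : ∀ x, r x + r x = 0 := by
      intro x
      have hne : r x + r (-x) = 0 := by rw [← hr, add_neg_cancel, hr0]
      have req : r x = r (-x) := by
        have h2' := h2 x
        rw [show -(ψ x) = ψ (-x) from (map_neg ψ x).symm] at h2'
        show q' (ψ x) - q x = q' (ψ (-x)) - q (-x)
        apply sub_eq_zero.mp
        have e : (q' (ψ x) - q x) - (q' (ψ (-x)) - q (-x))
            = (q' (ψ x) - q' (ψ (-x))) - (q x - q (-x)) := by abel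
        rw [e, h2']
        abel
      rw [← req] at hne
      exact hne
    have hc : Fintype.card G = Fintype.card G' := Fintype.card_congr ψ.toEquiv
    have hsum' : (∑ x', eQZ (q' x')) = ∑ x, eQZ (q x + r x) := by
      refine (Fintype.sum_equiv ψ.toEquiv (fun x => eQZ (q x + r x))
        (fun x' => eQZ (q' x')) (fun x => ?_)).symm
      show eQZ (q x + r x) = eQZ (q' (ψ x))
      congr 1
      show q x + (q' (ψ x) - q x) = q' (ψ x)
      abel
    have hinv : (((Real.sqrt (Fintype.card G) : ℝ)) : ℂ)⁻¹ ≠ 0 := by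
      exact inv_ne_zero (Complex.ofReal_ne_zero.mpr
        (Real.sqrt_ne_zero'.mpr (by exact_mod_cast Fintype.card_pos)))
    have hTS : (∑ x, eQZ (q x + r x)) = ∑ x, eQZ (q x) := by
      unfold gaussSum' at h3
      rw [← hc, hsum'] at h3
      exact (mul_left_cancel₀ hinv h3).symm
    obtain ⟨α, hα⟩ := master q r hq hnd hr hr2 hTS
    refine ⟨α.trans ψ, fun x => ?_⟩
    have h := hα x
    have e : q (α x) + r (α x) = q' (ψ (α x)) := by
      show q (α x) + (q' (ψ (α x)) - q (α x)) = q' (ψ (α x))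
      abel
    show q' (ψ (α x)) = q x
    rw [← e, h]
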